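/- Let the LQ system be controllable. Suppose there exists a Lagrangian subspace Γ ⊆ ℝ^{2n} that is invariant under Ω·ℍ, i.e. (Ω·ℍ)·u ∈ Γ for every u ∈ Γ. Then there is no conjugate time t ≠ 0. -/

import Mathlib

open Matrix

/-- The standard symplectic matrix `Ω = [[0, I],[−I, 0]]` on `ℝ^{2n}`. -/
noncomputable def Omega (n : ℕ) : Matrix (Fin n ⊕ Fin n) (Fin n ⊕ Fin n) ℝ :=
  Matrix.fromBlocks 0 1 (-1) 0

/-- The Hamiltonian matrix `ℍ = [[B Bᵀ, A],[Aᵀ, Q]]` of the LQ problem. -/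
noncomputable def HMat {n k : ℕ} (A Q : Matrix (Fin n) (Fin n) ℝ)
    (B : Matrix (Fin n) (Fin k) ℝ) : Matrix (Fin n ⊕ Fin n) (Fin n ⊕ Fin n) ℝ :=
  Matrix.fromBlocks (B * Bᵀ) A Aᵀ Q

/-- The Kalman matrix `[B, AB, …, A^{n−1}B]`. -/
noncomputable def Kalman {n k : ℕ} (A : Matrix (Fin n) (Fin n) ℝ)
    (B : Matrix (Fin n) (Fin k) ℝ) : Matrix (Fin n) (Fin n × Fin k) ℝ :=
  Matrix.of fun i jl => (A ^ (jl.1 : ℕ) * B) i jl.2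

/-- Controllability of the LQ system: the Kalman matrix has full rank. -/
def Controllable {n k : ℕ} (A : Matrix (Fin n) (Fin n) ℝ)
    (B : Matrix (Fin n) (Fin k) ℝ) : Prop :=
  (Kalman A B).rank = n

/-- `t` is a conjugate time: some nonzero vertical vector `(p,0)` is mapped by the
Hamiltonian flow `exp(t Ω ℍ)` back into the vertical subspace `𝒱 = {(p,0)}`. -/
def IsConjugateTime {n k : ℕ} (A Q : Matrix (Fin n) (Fin n) ℝ)
    (B : Matrix (Fin n) (Fin k) ℝ) (t : ℝ) : Prop :=
  ∃ p : Fin n → ℝ, p ≠ 0 ∧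
    ∀ i : Fin n,
      (NormedSpace.exp (t • (Omega n * HMat A Q B))).mulVec (Sum.elim p 0) (Sum.inr i) = 0

section Aux

open NormedSpace

variable {N : Type*} [Fintype N] [DecidableEq N]

/-- A submodule invariant under `M.mulVec` is invariant under `exp(M).mulVec`. -/
lemma exp_mulVec_mem (M : Matrix N N ℝ) (Γ : Submodule ℝ (N → ℝ))
    (hinv : ∀ u ∈ Γ, M.mulVec u ∈ Γ) {u : N → ℝ} (hu : u ∈ Γ) :
    (exp M).mulVec u ∈ Γ := by
  letI : SeminormedRing (Matrix N N ℝ) := Matrix.linftyOpSemiNormedRing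
  letI : NormedRing (Matrix N N ℝ) := Matrix.linftyOpNormedRing
  letI : NormedAlgebra ℝ (Matrix N N ℝ) := Matrix.linftyOpNormedAlgebra
  have hpow : ∀ j : ℕ, ∀ w ∈ Γ, (M ^ j).mulVec w ∈ Γ := by
    intro j
    induction j with
    | zero => intro w hw; simpa using hw
    | succ j ih =>
      intro w hw
      rw [pow_succ, ← Matrix.mulVec_mulVec]
      exact ih _ (hinv _ hw)
  let f : Matrix N N ℝ →ₗ[ℝ] (N → ℝ) :=
    { toFun := fun X => X.mulVec u
      map_add' := fun X Y => Matrix.add_mulVec X Y u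
      map_smul' := fun c X => Matrix.smul_mulVec c X u }
  have hsum : HasSum (fun j : ℕ => ((Nat.factorial j : ℝ)⁻¹) • M ^ j) (exp M) :=
    exp_series_hasSum_exp' M
  have hsum2 : HasSum (fun j : ℕ => f (((Nat.factorial j : ℝ)⁻¹) • M ^ j)) (f (exp M)) :=
    hsum.mapL (LinearMap.toContinuousLinearMap f)
  have hclosed : IsClosed (Γ : Set (N → ℝ)) := Submodule.closed_of_finiteDimensional Γ
  have : f (exp M) ∈ Γ := by
    refine hclosed.mem_of_tendsto hsum2.tendsto_sum_nat ?_
    filter_upwards with s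
    refine Submodule.sum_mem Γ fun j _ => ?_
    simpa [f, Matrix.smul_mulVec] using
      Γ.smul_mem ((Nat.factorial j : ℝ)⁻¹) (hpow j u hu)
  exact this

lemma ctrl_kernel {n k : ℕ} {A : Matrix (Fin n) (Fin n) ℝ} {B : Matrix (Fin n) (Fin k) ℝ}
    (hctrl : Controllable A B) {z : Fin n → ℝ}
    (hz : ∀ j : ℕ, Bᵀ.mulVec ((Aᵀ ^ j).mulVec z) = 0) : z = 0 := by
  have hK : (Kalman A B)ᵀ.mulVec z = 0 := by
    funext jl
    obtain ⟨j, l⟩ := jl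
    have h1 : Bᵀ.mulVec ((Aᵀ ^ (j : ℕ)).mulVec z) = 0 := hz j
    have h2 : (Bᵀ * Aᵀ ^ (j : ℕ)).mulVec z = 0 := by
      rw [Matrix.mulVec_mulVec] at h1; exact h1
    have h3 : Bᵀ * Aᵀ ^ (j : ℕ) = (A ^ (j : ℕ) * B)ᵀ := by
      rw [Matrix.transpose_mul, Matrix.transpose_pow]
    rw [h3] at h2
    have := congrFun h2 l
    simpa [Kalman, Matrix.mulVec, dotProduct, Matrix.transpose_apply] using this
  have hrank : ((Kalman A B)ᵀ).rank = n := by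
    rw [Matrix.rank_transpose]; exact hctrl
  have hmem : z ∈ LinearMap.ker ((Kalman A B)ᵀ).mulVecLin := by
    rw [LinearMap.mem_ker, Matrix.mulVecLin_apply]; exact hK
  have hrn := ((Kalman A B)ᵀ).mulVecLin.finrank_range_add_finrank_ker
  rw [show Module.finrank ℝ (Fin n → ℝ) = n by simp] at hrn
  have hrange : Module.finrank ℝ (LinearMap.range ((Kalman A B)ᵀ).mulVecLin) = n := hrank
  have hker0 : Module.finrank ℝ (LinearMap.ker ((Kalman A B)ᵀ).mulVecLin) = 0 := by omega
  have : LinearMap.ker ((Kalman A B)ᵀ).mulVecLin = ⊥ := Submodule.finrank_eq_zero.mp hker0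
  rw [this] at hmem
  simpa using hmem

lemma hasDerivAt_exp_flow (M : Matrix N N ℝ) (u : N → ℝ) (s : ℝ) :
    HasDerivAt (fun s : ℝ => (exp (s • M)).mulVec u)
      (M.mulVec ((exp (s • M)).mulVec u)) s := by
  letI : SeminormedRing (Matrix N N ℝ) := Matrix.linftyOpSemiNormedRing
  letI : NormedRing (Matrix N N ℝ) := Matrix.linftyOpNormedRing
  letI : NormedAlgebra ℝ (Matrix N N ℝ) := Matrix.linftyOpNormedAlgebra
  have h := hasDerivAt_exp_smul_const' (𝕂 := ℝ) M s
  let f : Matrix N N ℝ →ₗ[ℝ] (N → ℝ) :=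
    { toFun := fun X => X.mulVec u
      map_add' := fun X Y => Matrix.add_mulVec X Y u
      map_smul' := fun c X => Matrix.smul_mulVec c X u }
  have h2 := (LinearMap.toContinuousLinearMap f).hasFDerivAt.comp_hasDerivAt s h
  exact h2.congr_deriv (by rw [Matrix.mulVec_mulVec]; rfl)

lemma graph_of_subspace {n : ℕ} (Γ : Submodule ℝ (Fin n ⊕ Fin n → ℝ))
    (hdim : Module.finrank ℝ Γ = n)
    (hGV : ∀ p : Fin n → ℝ, Sum.elim p 0 ∈ Γ → p = 0) :
    ∃ S : Matrix (Fin n) (Fin n) ℝ,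
      (∀ x : Fin n → ℝ, Sum.elim (S.mulVec x) x ∈ Γ) ∧
      (∀ u ∈ Γ, u ∘ Sum.inl = S.mulVec (u ∘ Sum.inr)) := by
  classical
  let π₂ : (Fin n ⊕ Fin n → ℝ) →ₗ[ℝ] (Fin n → ℝ) := LinearMap.funLeft ℝ ℝ Sum.inr
  let π₁ : (Fin n ⊕ Fin n → ℝ) →ₗ[ℝ] (Fin n → ℝ) := LinearMap.funLeft ℝ ℝ Sum.inl
  let f : Γ →ₗ[ℝ] (Fin n → ℝ) := π₂.comp Γ.subtype
  have hinj : Function.Injective f := by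
    rw [← LinearMap.ker_eq_bot, Submodule.eq_bot_iff]
    rintro ⟨u, hu⟩ h
    have h2 : u ∘ Sum.inr = (0 : Fin n → ℝ) := LinearMap.mem_ker.mp h
    have hform : u = Sum.elim (u ∘ Sum.inl) 0 := by
      funext j
      cases j with
      | inl i => rfl
      | inr i => exact congrFun h2 i
    have : u ∘ Sum.inl = 0 := hGV _ (hform ▸ hu)
    have : u = 0 := by rw [hform, this]; funext j; cases j <;> simp
    exact Subtype.ext this
  have hfr : Module.finrank ℝ Γ = Module.finrank ℝ (Fin n → ℝ) := by
    simp [hdim]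
  have hsurj : Function.Surjective f :=
    (LinearMap.injective_iff_surjective_of_finrank_eq_finrank hfr).mp hinj
  let e : Γ ≃ₗ[ℝ] (Fin n → ℝ) := LinearEquiv.ofBijective f ⟨hinj, hsurj⟩
  let L : (Fin n → ℝ) →ₗ[ℝ] (Fin n → ℝ) := π₁.comp (Γ.subtype.comp (e.symm : (Fin n → ℝ) →ₗ[ℝ] Γ))
  refine ⟨LinearMap.toMatrix' L, ?_, ?_⟩
  · intro x
    have hmv : (LinearMap.toMatrix' L).mulVec x = L x := by
      rw [← Matrix.toLin'_apply, Matrix.toLin'_toMatrix']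
    have hw : ((e.symm x : Γ) : Fin n ⊕ Fin n → ℝ) ∈ Γ := (e.symm x).2
    have hsnd : ((e.symm x : Γ) : Fin n ⊕ Fin n → ℝ) ∘ Sum.inr = x := by
      have : f (e.symm x) = x := e.apply_symm_apply x
      exact this
    have hfst : L x = ((e.symm x : Γ) : Fin n ⊕ Fin n → ℝ) ∘ Sum.inl := rfl
    have : Sum.elim ((LinearMap.toMatrix' L).mulVec x) x
        = ((e.symm x : Γ) : Fin n ⊕ Fin n → ℝ) := by
      funext j
      cases j with
      | inl i => rw [hmv, hfst]; rfl
      | inr i => exact (congrFun hsnd i).symm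
    rw [this]; exact hw
  · intro u hu
    have hmv : (LinearMap.toMatrix' L).mulVec (u ∘ Sum.inr)
        = L (u ∘ Sum.inr) := by
      rw [← Matrix.toLin'_apply, Matrix.toLin'_toMatrix']
    rw [hmv]
    have he : e ⟨u, hu⟩ = u ∘ Sum.inr := rfl
    have hs : e.symm (u ∘ Sum.inr) = ⟨u, hu⟩ := by
      rw [← he, e.symm_apply_apply]
    show _ = π₁.comp (Γ.subtype.comp (e.symm : (Fin n → ℝ) →ₗ[ℝ] Γ)) (u ∘ Sum.inr)
    simp only [LinearMap.comp_apply, LinearEquiv.coe_coe, hs]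
    rfl

end Aux

theorem no_conjugate_times_of_invariant_lagrangian {n k : ℕ}
    (hn : 1 ≤ n) (hk : 1 ≤ k)
    (A Q : Matrix (Fin n) (Fin n) ℝ) (hQ : Q.IsSymm) (B : Matrix (Fin n) (Fin k) ℝ)
    (hctrl : Controllable A B)
    (Γ : Submodule ℝ (Fin n ⊕ Fin n → ℝ))
    (hdim : Module.finrank ℝ Γ = n)
    (hisotropic : ∀ u ∈ Γ, ∀ v ∈ Γ, u ⬝ᵥ (Omega n).mulVec v = 0)
    (hinv : ∀ u ∈ Γ, (Omega n * HMat A Q B).mulVec u ∈ Γ) :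
    ∀ t : ℝ, t ≠ 0 → ¬ IsConjugateTime A Q B t := by
  intro t ht hconj
  obtain ⟨p₀, hp₀, hx⟩ := hconj
  set M : Matrix (Fin n ⊕ Fin n) (Fin n ⊕ Fin n) ℝ := Omega n * HMat A Q B with hMdef
  -- block formula for M.mulVec
  have hMmv : ∀ u : Fin n ⊕ Fin n → ℝ,
      M.mulVec u = Sum.elim
        (Aᵀ.mulVec (u ∘ Sum.inl) + Q.mulVec (u ∘ Sum.inr))
        (-(B.mulVec (Bᵀ.mulVec (u ∘ Sum.inl)) + A.mulVec (u ∘ Sum.inr))) := by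
    intro u
    rw [hMdef, ← Matrix.mulVec_mulVec]
    rw [show HMat A Q B = Matrix.fromBlocks (B * Bᵀ) A Aᵀ Q from rfl,
      Matrix.fromBlocks_mulVec,
      show Omega n = Matrix.fromBlocks 0 1 (-1) 0 from rfl,
      Matrix.fromBlocks_mulVec]
    simp only [Sum.elim_comp_inl, Sum.elim_comp_inr, Matrix.zero_mulVec, Matrix.one_mulVec,
      Matrix.neg_mulVec, Matrix.mulVec_mulVec, zero_add, add_zero, neg_one_smul]
  -- vertical vectors in Γ are killed by Bᵀ
  have hBp : ∀ p : Fin n → ℝ, Sum.elim p 0 ∈ Γ → Bᵀ.mulVec p = 0 := by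
    intro p hp
    have h1 := hisotropic _ hp _ (hinv _ hp)
    rw [hMmv (Sum.elim p 0),
      show Omega n = Matrix.fromBlocks 0 1 (-1) 0 from rfl,
      Matrix.fromBlocks_mulVec] at h1
    simp only [Sum.elim_comp_inl, Sum.elim_comp_inr, Matrix.mulVec_zero, add_zero,
      Matrix.zero_mulVec, Matrix.one_mulVec, zero_add,
      sumElim_dotProduct_sumElim, zero_dotProduct, dotProduct_zero,
      dotProduct_neg] at h1
    have h4 : p ⬝ᵥ B.mulVec (Bᵀ.mulVec p) = 0 := by
      simpa using h1
    have h5 : (Bᵀ.mulVec p) ⬝ᵥ (Bᵀ.mulVec p) = 0 := by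
      rw [Matrix.dotProduct_mulVec, ← Matrix.mulVec_transpose] at h4
      exact h4
    exact dotProduct_self_eq_zero.mp h5
  -- Γ meets the vertical subspace trivially
  have hGV : ∀ p : Fin n → ℝ, Sum.elim p 0 ∈ Γ → p = 0 := by
    intro p hp
    have hiter : ∀ j : ℕ, Sum.elim ((Aᵀ ^ j).mulVec p) 0 ∈ Γ := by
      intro j
      induction j with
      | zero => simpa using hp
      | succ j ih =>
        have h2 := hinv _ ih
        rw [hMmv] at h2
        have hb := hBp _ ih
        simp only [Sum.elim_comp_inl, Sum.elim_comp_inr, hb, Matrix.mulVec_zero, add_zero,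
          zero_add, neg_zero] at h2
        simpa [Matrix.mulVec_mulVec, ← pow_succ'] using h2
    exact ctrl_kernel hctrl fun j => hBp _ (hiter j)
  obtain ⟨S, hS1, hS2⟩ := graph_of_subspace Γ hdim hGV
  -- S is symmetric as a bilinear form
  have hsym : ∀ w x : Fin n → ℝ, (S.mulVec w) ⬝ᵥ x = w ⬝ᵥ (S.mulVec x) := by
    intro w x
    have h1 := hisotropic _ (hS1 w) _ (hS1 x)
    rw [show Omega n = Matrix.fromBlocks 0 1 (-1) 0 from rfl, Matrix.fromBlocks_mulVec] at h1
    simp only [Sum.elim_comp_inl, Sum.elim_comp_inr, Matrix.zero_mulVec, Matrix.one_mulVec,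
      zero_add, add_zero, sumElim_dotProduct_sumElim, dotProduct_neg] at h1
    have h2 : (Matrix.fromBlocks 0 (1 : Matrix (Fin n) (Fin n) ℝ) (-1) 0) = Omega n := rfl
    -- h1 : S *ᵥ w ⬝ᵥ x + -(w ⬝ᵥ ((-1 : Matrix _ _ ℝ) *ᵥ (S *ᵥ x))) = 0 (roughly)
    rw [show ((-1 : Matrix (Fin n) (Fin n) ℝ)) = -(1 : Matrix (Fin n) (Fin n) ℝ) from rfl,
      Matrix.neg_mulVec, Matrix.one_mulVec] at h1
    simp only [dotProduct_neg] at h1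
    linarith [h1]
  -- Riccati equation
  have hric : ∀ x : Fin n → ℝ,
      Aᵀ.mulVec (S.mulVec x) + Q.mulVec x
        + S.mulVec (B.mulVec (Bᵀ.mulVec (S.mulVec x))) + S.mulVec (A.mulVec x) = 0 := by
    intro x
    have h1 := hS2 _ (hinv _ (hS1 x))
    rw [hMmv] at h1
    simp only [Sum.elim_comp_inl, Sum.elim_comp_inr] at h1
    rw [Matrix.mulVec_neg, Matrix.mulVec_add] at h1
    rw [h1]
    abel
  -- setup flow
  set C : Matrix (Fin n) (Fin n) ℝ := Aᵀ + S * B * Bᵀ with hCdef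
  set u₀ : Fin n ⊕ Fin n → ℝ := Sum.elim p₀ 0 with hu₀
  set v : ℝ → (Fin n ⊕ Fin n → ℝ) := fun s => (NormedSpace.exp (s • M)).mulVec u₀ with hvdef
  set X : ℝ → (Fin n → ℝ) := fun s => v s ∘ Sum.inr with hXdef
  set Y : ℝ → (Fin n → ℝ) := fun s => v s ∘ Sum.inl - S.mulVec (X s) with hYdef
  -- key algebra 1
  have halg1 : ∀ u : Fin n ⊕ Fin n → ℝ,
      (M.mulVec u) ∘ Sum.inl - S.mulVec ((M.mulVec u) ∘ Sum.inr)
      = C.mulVec ((u ∘ Sum.inl) - S.mulVec (u ∘ Sum.inr)) := by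
    intro u
    rw [hMmv u]
    simp only [Sum.elim_comp_inl, Sum.elim_comp_inr]
    rw [hCdef]
    rw [Matrix.add_mulVec, Matrix.mulVec_neg, Matrix.mulVec_add]
    have h5 : (S * B * Bᵀ).mulVec ((u ∘ Sum.inl) - S.mulVec (u ∘ Sum.inr))
        = S.mulVec (B.mulVec (Bᵀ.mulVec ((u ∘ Sum.inl) - S.mulVec (u ∘ Sum.inr)))) := by
      rw [Matrix.mulVec_mulVec, Matrix.mulVec_mulVec]
    rw [h5]
    rw [Matrix.mulVec_sub, Matrix.mulVec_sub, Matrix.mulVec_sub, Matrix.mulVec_sub]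
    have h6 := hric (u ∘ Sum.inr)
    linear_combination h6
  -- key algebra 2
  have halg2 : ∀ x y : Fin n → ℝ,
      (C.mulVec y) ⬝ᵥ x
        + y ⬝ᵥ (-(B.mulVec (Bᵀ.mulVec (y + S.mulVec x)) + A.mulVec x))
      = -((Bᵀ.mulVec y) ⬝ᵥ (Bᵀ.mulVec y)) := by
    intro x y
    rw [hCdef, Matrix.add_mulVec]
    have h5 : (S * B * Bᵀ).mulVec y = S.mulVec (B.mulVec (Bᵀ.mulVec y)) := by
      rw [Matrix.mulVec_mulVec, Matrix.mulVec_mulVec]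
    rw [h5, Matrix.mulVec_add]
    have h1 : (Aᵀ.mulVec y) ⬝ᵥ x = y ⬝ᵥ (A.mulVec x) := by
      rw [Matrix.dotProduct_mulVec, ← Matrix.mulVec_transpose]
    have h2 : (S.mulVec (B.mulVec (Bᵀ.mulVec y))) ⬝ᵥ x
        = (Bᵀ.mulVec y) ⬝ᵥ (Bᵀ.mulVec (S.mulVec x)) := by
      rw [hsym, dotProduct_comm, Matrix.dotProduct_mulVec, ← Matrix.mulVec_transpose,
        dotProduct_comm]
    have h3 : y ⬝ᵥ (B.mulVec (Bᵀ.mulVec (S.mulVec x)))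
        = (Bᵀ.mulVec y) ⬝ᵥ (Bᵀ.mulVec (S.mulVec x)) := by
      rw [Matrix.dotProduct_mulVec, ← Matrix.mulVec_transpose]
    have h4 : y ⬝ᵥ (B.mulVec (Bᵀ.mulVec y)) = (Bᵀ.mulVec y) ⬝ᵥ (Bᵀ.mulVec y) := by
      rw [Matrix.dotProduct_mulVec, ← Matrix.mulVec_transpose]
    simp only [add_dotProduct, dotProduct_neg, dotProduct_add,
      Matrix.mulVec_add]
    linarith [h1, h2, h3, h4]
  -- derivatives
  have hvdc : ∀ (s : ℝ) (j : Fin n ⊕ Fin n),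
      HasDerivAt (fun s => v s j) ((M.mulVec (v s)) j) s := by
    intro s j
    have h := hasDerivAt_exp_flow M u₀ s
    have h2 := (ContinuousLinearMap.proj (R := ℝ) (φ := fun _ : Fin n ⊕ Fin n => ℝ)
      j).hasFDerivAt.comp_hasDerivAt s h
    exact h2
  have hYd : ∀ (s : ℝ) (i : Fin n),
      HasDerivAt (fun s => Y s i) ((C.mulVec (Y s)) i) s := by
    intro s i
    have hsum : HasDerivAt (fun s => ∑ j, S i j * v s (Sum.inr j))
        (∑ j, S i j * (M.mulVec (v s)) (Sum.inr j)) s :=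
      HasDerivAt.fun_sum fun j _ => (hvdc s (Sum.inr j)).const_mul (S i j)
    have h := (hvdc s (Sum.inl i)).sub hsum
    have heq1 : (fun s => Y s i) = fun s => v s (Sum.inl i) - ∑ j, S i j * v s (Sum.inr j) := by
      funext s
      simp [hYdef, hXdef, Matrix.mulVec, dotProduct]
    have heq2 : (C.mulVec (Y s)) i
        = (M.mulVec (v s)) (Sum.inl i) - ∑ j, S i j * (M.mulVec (v s)) (Sum.inr j) := by
      have hh := congrFun (halg1 (v s)) i
      simp only [Pi.sub_apply] at hh
      rw [hYdef]
      simp only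
      rw [hXdef]
      simp only
      rw [← hh]
      simp [Matrix.mulVec, dotProduct]
    rw [heq1, heq2]
    exact h
  set φ : ℝ → ℝ := fun s => Y s ⬝ᵥ X s with hφdef
  have hφd : ∀ s : ℝ,
      HasDerivAt φ (-((Bᵀ.mulVec (Y s)) ⬝ᵥ (Bᵀ.mulVec (Y s)))) s := by
    intro s
    have hsum : HasDerivAt (fun s => ∑ i, Y s i * X s i)
        (∑ i, ((C.mulVec (Y s)) i * X s i + Y s i * (M.mulVec (v s)) (Sum.inr i))) s :=
      HasDerivAt.fun_sum fun i _ => (hYd s i).mul (hvdc s (Sum.inr i))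
    have heq1 : φ = fun s => ∑ i, Y s i * X s i := by
      funext s; rfl
    have heq2 : (∑ i, ((C.mulVec (Y s)) i * X s i + Y s i * (M.mulVec (v s)) (Sum.inr i)))
        = -((Bᵀ.mulVec (Y s)) ⬝ᵥ (Bᵀ.mulVec (Y s))) := by
      have hMr : (M.mulVec (v s)) ∘ Sum.inr
          = -(B.mulVec (Bᵀ.mulVec (Y s + S.mulVec (X s))) + A.mulVec (X s)) := by
        rw [hMmv (v s)]
        simp only [Sum.elim_comp_inr]
        have hvl : v s ∘ Sum.inl = Y s + S.mulVec (X s) := by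
          rw [hYdef]
          simp only
          rw [sub_add_cancel]
        rw [hvl, hXdef]
      have hkey := halg2 (X s) (Y s)
      rw [← hkey]
      have hsplit : (∑ i, ((C.mulVec (Y s)) i * X s i + Y s i * (M.mulVec (v s)) (Sum.inr i)))
          = (C.mulVec (Y s)) ⬝ᵥ (X s) + Y s ⬝ᵥ ((M.mulVec (v s)) ∘ Sum.inr) := by
        rw [Finset.sum_add_distrib]; rfl
      rw [hsplit, hMr]
    rw [heq1, ← heq2]
    exact hsum
  -- φ vanishes at 0 and t
  have hX0 : X 0 = 0 := by
    funext i
    rw [hXdef]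
    simp only [Function.comp_apply, hvdef]
    simp only [zero_smul, NormedSpace.exp_zero, Matrix.one_mulVec]
    rfl
  have hXt : X t = 0 := by
    funext i
    exact hx i
  have hφ0 : φ 0 = 0 := by rw [hφdef]; simp [hX0]
  have hφt : φ t = 0 := by rw [hφdef]; simp [hXt]
  -- φ is antitone
  have hanti : Antitone φ := by
    apply antitone_of_deriv_nonpos
    · exact fun s => (hφd s).differentiableAt
    · intro s
      rw [(hφd s).deriv]
      have : (0:ℝ) ≤ (Bᵀ.mulVec (Y s)) ⬝ᵥ (Bᵀ.mulVec (Y s)) :=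
        Finset.sum_nonneg fun i _ => mul_self_nonneg _
      linarith
  set a : ℝ := min 0 t with hadef
  set b : ℝ := max 0 t with hbdef
  have hab : a < b := by
    rw [hadef, hbdef]
    exact min_lt_max.mpr (Ne.symm ht)
  have hφa : φ a = 0 := by
    rcases min_cases 0 t with ⟨h, _⟩ | ⟨h, _⟩ <;> rw [hadef, h] <;> assumption
  have hφb : φ b = 0 := by
    rcases max_cases 0 t with ⟨h, _⟩ | ⟨h, _⟩ <;> rw [hbdef, h] <;> assumption
  have hφzero : ∀ s ∈ Set.Icc a b, φ s = 0 := by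
    intro s hs
    have h1 : φ s ≤ 0 := hφa ▸ hanti hs.1
    have h2 : 0 ≤ φ s := hφb ▸ hanti hs.2
    linarith
  -- on the open interval, Bᵀ Y s = 0
  have hBY : ∀ s ∈ Set.Ioo a b, Bᵀ.mulVec (Y s) = 0 := by
    intro s hs
    have hev : φ =ᶠ[nhds s] fun _ => 0 := by
      filter_upwards [isOpen_Ioo.mem_nhds hs] with x hx
      exact hφzero x (Set.Ioo_subset_Icc_self hx)
    have hd : deriv φ s = 0 := by
      rw [hev.deriv_eq]; simp
    rw [(hφd s).deriv] at hd
    have : (Bᵀ.mulVec (Y s)) ⬝ᵥ (Bᵀ.mulVec (Y s)) = 0 := by linarith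
    exact dotProduct_self_eq_zero.mp this
  -- iterate: Bᵀ C^j Y s = 0 on the open interval
  have hBCY : ∀ j : ℕ, ∀ s ∈ Set.Ioo a b, (Bᵀ * C ^ j).mulVec (Y s) = 0 := by
    intro j
    induction j with
    | zero =>
      intro s hs
      simpa using hBY s hs
    | succ j ih =>
      intro s hs
      funext l
      have hg : HasDerivAt (fun s => ((Bᵀ * C ^ j).mulVec (Y s)) l)
          (((Bᵀ * C ^ j).mulVec (C.mulVec (Y s))) l) s := by
        have hsum : HasDerivAt (fun s => ∑ i, (Bᵀ * C ^ j) l i * Y s i)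
            (∑ i, (Bᵀ * C ^ j) l i * (C.mulVec (Y s)) i) s :=
          HasDerivAt.fun_sum fun i _ => (hYd s i).const_mul ((Bᵀ * C ^ j) l i)
        have e1 : (fun s => ((Bᵀ * C ^ j).mulVec (Y s)) l)
            = fun s => ∑ i, (Bᵀ * C ^ j) l i * Y s i := by
          funext s; simp [Matrix.mulVec, dotProduct]
        have e2 : (((Bᵀ * C ^ j).mulVec (C.mulVec (Y s))) l)
            = ∑ i, (Bᵀ * C ^ j) l i * (C.mulVec (Y s)) i := by
          simp [Matrix.mulVec, dotProduct]
        rw [e1, e2]; exact hsum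
      have hev : (fun s => ((Bᵀ * C ^ j).mulVec (Y s)) l) =ᶠ[nhds s] fun _ => 0 := by
        filter_upwards [isOpen_Ioo.mem_nhds hs] with x hx
        rw [ih x hx]; rfl
      have hd : deriv (fun s => ((Bᵀ * C ^ j).mulVec (Y s)) l) s = 0 := by
        rw [hev.deriv_eq]; simp
      rw [hg.deriv] at hd
      have e3 : ((Bᵀ * C ^ (j + 1)).mulVec (Y s)) l
          = ((Bᵀ * C ^ j).mulVec (C.mulVec (Y s))) l := by
        rw [Matrix.mulVec_mulVec, pow_succ, ← Matrix.mul_assoc]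
      rw [e3, hd]; rfl
  -- pick an interior point
  set s₀ : ℝ := (a + b) / 2 with hs₀def
  have hs₀ : s₀ ∈ Set.Ioo a b := by
    constructor <;> rw [hs₀def] <;> linarith
  -- C^j Y s₀ = (Aᵀ)^j Y s₀
  have hCA : ∀ j : ℕ, (C ^ j).mulVec (Y s₀) = (Aᵀ ^ j).mulVec (Y s₀) := by
    intro j
    induction j with
    | zero => simp
    | succ j ih =>
      have h1 : (C ^ (j + 1)).mulVec (Y s₀) = C.mulVec ((C ^ j).mulVec (Y s₀)) := by
        rw [Matrix.mulVec_mulVec, ← pow_succ']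
      have h2 : Bᵀ.mulVec ((C ^ j).mulVec (Y s₀)) = 0 := by
        rw [Matrix.mulVec_mulVec]
        exact hBCY j s₀ hs₀
      rw [h1, hCdef, Matrix.add_mulVec]
      have h3 : (S * B * Bᵀ).mulVec ((C ^ j).mulVec (Y s₀))
          = S.mulVec (B.mulVec (Bᵀ.mulVec ((C ^ j).mulVec (Y s₀)))) := by
        rw [← Matrix.mulVec_mulVec, ← Matrix.mulVec_mulVec]
      rw [h3, h2]
      simp only [Matrix.mulVec_zero, add_zero]
      rw [ih, Matrix.mulVec_mulVec, ← pow_succ']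
  have hzero : Y s₀ = 0 := by
    apply ctrl_kernel hctrl
    intro j
    rw [← hCA j, Matrix.mulVec_mulVec]
    exact hBCY j s₀ hs₀
  -- hence v s₀ ∈ Γ
  have hvs₀ : v s₀ ∈ Γ := by
    have hPX : v s₀ ∘ Sum.inl = S.mulVec (X s₀) := by
      have h0 := hzero
      rw [hYdef] at h0
      simp only at h0
      exact sub_eq_zero.mp h0
    have hform : v s₀ = Sum.elim (S.mulVec (X s₀)) (X s₀) := by
      funext j
      cases j with
      | inl i => exact congrFun hPX i
      | inr i => rfl
    rw [hform]
    exact hS1 (X s₀)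
  -- pull back along the flow: u₀ ∈ Γ
  have hM2 : ∀ u ∈ Γ, ((-s₀) • M).mulVec u ∈ Γ := by
    intro u hu
    rw [Matrix.smul_mulVec]
    exact Γ.smul_mem _ (hinv u hu)
  have hpull : (NormedSpace.exp ((-s₀) • M)).mulVec (v s₀) ∈ Γ :=
    exp_mulVec_mem _ Γ hM2 hvs₀
  have hcomp : (NormedSpace.exp ((-s₀) • M)).mulVec (v s₀) = u₀ := by
    rw [hvdef]
    simp only
    rw [Matrix.mulVec_mulVec]
    have hcomm : Commute ((-s₀) • M) (s₀ • M) := ((Commute.refl M).smul_left _).smul_right _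
    rw [← Matrix.exp_add_of_commute _ _ hcomm]
    have h0 : (-s₀) • M + s₀ • M = 0 := by
      rw [← add_smul]; simp
    rw [h0, NormedSpace.exp_zero, Matrix.one_mulVec]
  rw [hcomp] at hpull
  have : p₀ = 0 := hGV p₀ hpull
  exact hp₀ this
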